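/- Let p > 1 and let f : ℕ → ℝ≥0 be concave with n ↦ f(n)^p/n non-decreasing for n ≥ 1. Then for every m ≥ 1, ∑_{n=1}^{m} f(n)^p/n ≥ (1/2)^{3+p} · f(m)^p. -/
import Mathlib


/-- Core comparison step of Lemma 2.2: if `f` is concave and `n ↦ f(n)^p/n` is non-decreasing
for `n ≥ 1`, then `∑_{n=1}^m f(n)^p/n ≥ (1/2)^{3+p} f(m)^p` for all `m ≥ 1`. -/
theorem stmt19 (p : ℝ) (hp : 1 < p) (f : ℕ → ℝ) (hf0 : ∀ n, 0 ≤ f n)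
    (hmono : Monotone f)
    (hconc : ∀ m n : ℕ, m ≤ n → f (n + m) - f n ≤ f n - f (n - m))
    (hincr : ∀ a b : ℕ, 1 ≤ a → a ≤ b → f a ^ p / (a : ℝ) ≤ f b ^ p / (b : ℝ)) :
    ∀ m : ℕ, 1 ≤ m →
      ((1 : ℝ) / 2) ^ (3 + p) * f m ^ p ≤ ∑ n ∈ Finset.Icc 1 m, f n ^ p / (n : ℝ) := by
  intro m hm
  set k := (m + 1) / 2 with hk
  have hk1 : 1 ≤ k := by omega
  have hkm : k ≤ m := by omega
  have hmk : m - k ≤ k := by omega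
  have hfk0 : 0 ≤ f k := hf0 k
  have hfm0 : 0 ≤ f m := hf0 m
  -- f m ≤ 2 f k from concavity
  have hfm : f m ≤ 2 * f k := by
    have h := hconc (m - k) k hmk
    have hkk : k + (m - k) = m := by omega
    rw [hkk] at h
    have := hf0 (k - (m - k))
    linarith
  -- f m ^ p ≤ 2^p * f k ^ p
  have hstep1 : f m ^ p ≤ 2 ^ p * f k ^ p := by
    calc f m ^ p ≤ (2 * f k) ^ p := Real.rpow_le_rpow hfm0 hfm (by linarith)
    _ = 2 ^ p * f k ^ p := Real.mul_rpow (by norm_num) hfk0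
  -- the sum dominates f k ^ p
  have hsum : f k ^ p ≤ ∑ n ∈ Finset.Icc 1 m, f n ^ p / (n : ℝ) := by
    have hsub : Finset.Icc k m ⊆ Finset.Icc 1 m := Finset.Icc_subset_Icc hk1 le_rfl
    have h1 : ∑ n ∈ Finset.Icc k m, f n ^ p / (n : ℝ)
        ≤ ∑ n ∈ Finset.Icc 1 m, f n ^ p / (n : ℝ) :=
      Finset.sum_le_sum_of_subset_of_nonneg hsub
        (fun i _ _ => div_nonneg (Real.rpow_nonneg (hf0 i) p) (Nat.cast_nonneg i))
    have h2 : ∑ _n ∈ Finset.Icc k m, f k ^ p / (k : ℝ)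
        ≤ ∑ n ∈ Finset.Icc k m, f n ^ p / (n : ℝ) := by
      apply Finset.sum_le_sum
      intro i hi
      simp only [Finset.mem_Icc] at hi
      exact hincr k i hk1 hi.1
    have hkpos : (0 : ℝ) < k := by exact_mod_cast hk1
    have h3 : f k ^ p ≤ ∑ _n ∈ Finset.Icc k m, f k ^ p / (k : ℝ) := by
      rw [Finset.sum_const, Nat.card_Icc, nsmul_eq_mul]
      have hk' : (k : ℝ) ≤ ((m + 1 - k : ℕ) : ℝ) := by
        have : k ≤ m + 1 - k := by omega
        exact_mod_cast this
      have heq : f k ^ p = (k : ℝ) * (f k ^ p / (k : ℝ)) := by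
        field_simp
      nth_rewrite 1 [heq]
      exact mul_le_mul_of_nonneg_right hk'
        (div_nonneg (Real.rpow_nonneg hfk0 p) hkpos.le)
    linarith
  -- combine
  have hA : ((1 : ℝ) / 2) ^ p * 2 ^ p = 1 := by
    rw [← Real.mul_rpow (by norm_num) (by norm_num)]
    norm_num
  have hsplit : ((1 : ℝ) / 2) ^ (3 + p) = (1 / 8) * (1 / 2) ^ p := by
    rw [Real.rpow_add (by norm_num : (0:ℝ) < 1/2)]
    congr 1
    rw [show (3 : ℝ) = ((3 : ℕ) : ℝ) by norm_num, Real.rpow_natCast]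
    norm_num
  have hstep2 : ((1 : ℝ) / 2) ^ p * f m ^ p ≤ f k ^ p := by
    have hpow : (0 : ℝ) ≤ (1/2 : ℝ) ^ p := Real.rpow_nonneg (by norm_num) p
    calc ((1 : ℝ) / 2) ^ p * f m ^ p ≤ (1/2 : ℝ) ^ p * (2 ^ p * f k ^ p) := by
          exact mul_le_mul_of_nonneg_left hstep1 hpow
      _ = f k ^ p := by rw [← mul_assoc, hA, one_mul]
  calc ((1 : ℝ) / 2) ^ (3 + p) * f m ^ p
      = (1 / 8) * ((1/2 : ℝ) ^ p * f m ^ p) := by rw [hsplit]; ring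
    _ ≤ (1 / 8) * f k ^ p := by
        apply mul_le_mul_of_nonneg_left hstep2 (by norm_num)
    _ ≤ f k ^ p := by
        have := Real.rpow_nonneg hfk0 p
        linarith
    _ ≤ _ := hsum
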